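/- Assume A ∈ ℝ^{N×d} and y ∈ ℝ^N satisfy the standing assumption (unique case). Then: (1) both S and S^c are nonempty, and for every n ∈ ker(A) with n ≠ 0 the restriction n_{S^c} is nonzero (so the null space constants ρ, ρ⁻, ρ̃ are well-defined); (2) 0 ≤ ρ < 1, 0 ≤ ρ⁻ < ∞, 0 ≤ ρ̃ < ∞, and the three suprema defining ρ, ρ⁻ and ρ̃ are attained by some n ∈ ker(A)\{0}. -/

import Mathlib

open scoped BigOperators

noncomputable section

/-- The ℓ¹-norm of a vector in ℝ^d. -/
def l1 {d : ℕ} (x : Fin d → ℝ) : ℝ := ∑ i, |x i|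

/-- The support of a vector, as a finset of indices. -/
def suppF {d : ℕ} (g : Fin d → ℝ) : Finset (Fin d) :=
  Finset.univ.filter (fun i => g i ≠ 0)

/-- The set of quotients whose supremum defines the null space constant ρ. -/
def rhoSet {N d : ℕ} (A : Matrix (Fin N) (Fin d) ℝ) (g : Fin d → ℝ) : Set ℝ :=
  { r | ∃ n : Fin d → ℝ, A.mulVec n = 0 ∧ n ≠ 0 ∧
      r = (-∑ i ∈ suppF g, Real.sign (g i) * n i) / ∑ i ∈ (suppF g)ᶜ, |n i| }

/-- The null space constant ρ. -/
def rho {N d : ℕ} (A : Matrix (Fin N) (Fin d) ℝ) (g : Fin d → ℝ) : ℝ :=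
  sSup (rhoSet A g)

/-- The set of quotients whose supremum defines the null space constant ρ⁻. -/
def rhoMinusSet {N d : ℕ} (A : Matrix (Fin N) (Fin d) ℝ) (g : Fin d → ℝ) : Set ℝ :=
  { r | ∃ n : Fin d → ℝ, A.mulVec n = 0 ∧ n ≠ 0 ∧
      r = (∑ i ∈ (suppF g).filter (fun i => Real.sign (g i) * n i < 0), |n i|) /
          ∑ i ∈ (suppF g)ᶜ, |n i| }

/-- The null space constant ρ⁻. -/
def rhoMinus {N d : ℕ} (A : Matrix (Fin N) (Fin d) ℝ) (g : Fin d → ℝ) : ℝ :=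
  sSup (rhoMinusSet A g)

/-- The set of quotients whose supremum defines the null space constant ρ̃. -/
def rhoTildeSet {N d : ℕ} (A : Matrix (Fin N) (Fin d) ℝ) (g : Fin d → ℝ) : Set ℝ :=
  { r | ∃ n : Fin d → ℝ, A.mulVec n = 0 ∧ n ≠ 0 ∧
      r = (∑ i ∈ suppF g, |n i|) / ∑ i ∈ (suppF g)ᶜ, |n i| }

/-- The null space constant ρ̃. -/
def rhoTilde {N d : ℕ} (A : Matrix (Fin N) (Fin d) ℝ) (g : Fin d → ℝ) : ℝ :=
  sSup (rhoTildeSet A g)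

/-- min_{i ∈ S} |g i|, where S = supp g. -/
def minS {d : ℕ} (g : Fin d → ℝ) : ℝ := sInf { r | ∃ i ∈ suppF g, r = |g i| }

/-- max_{i ∈ S} |g i|, where S = supp g. -/
def maxS {d : ℕ} (g : Fin d → ℝ) : ℝ := sSup { r | ∃ i ∈ suppF g, r = |g i| }

/-- The condition number κ* of g. -/
def kappa {d : ℕ} (g : Fin d → ℝ) : ℝ := maxS g / minS g

/-- The ℓ∞-norm of the restriction of a vector to a set T of indices. -/
def linftyOn {d : ℕ} (T : Finset (Fin d)) (v : Fin d → ℝ) : ℝ :=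
  sSup { r | ∃ i ∈ T, r = |v i| }

/-- The ℓ∞-norm of a vector. -/
def linfty {d : ℕ} (v : Fin d → ℝ) : ℝ := sSup { r | ∃ i : Fin d, r = |v i| }

lemma l1_nonneg {d : ℕ} (x : Fin d → ℝ) : 0 ≤ l1 x :=
  Finset.sum_nonneg fun _ _ => abs_nonneg _

lemma abs_le_l1 {d : ℕ} (x : Fin d → ℝ) (i : Fin d) : |x i| ≤ l1 x := by
  unfold l1
  exact Finset.single_le_sum (fun j _ => abs_nonneg (x j)) (Finset.mem_univ i)

lemma l1_pos {d : ℕ} {x : Fin d → ℝ} (hx : x ≠ 0) : 0 < l1 x := by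
  obtain ⟨i, hi⟩ := Function.ne_iff.mp hx
  exact lt_of_lt_of_le (abs_pos.mpr hi) (abs_le_l1 x i)

lemma l1_smul {d : ℕ} (c : ℝ) (x : Fin d → ℝ) : l1 (c • x) = |c| * l1 x := by
  simp [l1, Finset.mul_sum, abs_mul]

lemma mem_suppF {d : ℕ} {g : Fin d → ℝ} {i : Fin d} : i ∈ suppF g ↔ g i ≠ 0 := by
  simp [suppF]

lemma mem_suppF_compl {d : ℕ} {g : Fin d → ℝ} {i : Fin d} :
    i ∈ (suppF g)ᶜ ↔ g i = 0 := by
  simp [suppF]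

/-- Key analytic lemma. -/
lemma key_lemma {N d : ℕ} {A : Matrix (Fin N) (Fin d) ℝ} {y : Fin N → ℝ} {g : Fin d → ℝ}
    (hy : y ≠ 0) (hgy : A.mulVec g = y)
    (hgmin : ∀ x : Fin d → ℝ, A.mulVec x = y → l1 g ≤ l1 x)
    (hguniq : ∀ x : Fin d → ℝ, A.mulVec x = y → l1 x = l1 g → x = g)
    {n : Fin d → ℝ} (hn : A.mulVec n = 0) (hn0 : n ≠ 0) :
    |∑ i ∈ suppF g, Real.sign (g i) * n i| < ∑ i ∈ (suppF g)ᶜ, |n i| := by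
  have hg0 : g ≠ 0 := by
    rintro rfl
    exact hy (by simpa using hgy.symm)
  have hS : (suppF g).Nonempty := by
    obtain ⟨i, hi⟩ := Function.ne_iff.mp hg0
    exact ⟨i, mem_suppF.mpr hi⟩
  set δ : ℝ := (suppF g).inf' hS (fun i => |g i|) with hδdef
  have hδ : 0 < δ := by
    rw [hδdef, Finset.lt_inf'_iff]
    intro i hi
    exact abs_pos.mpr (mem_suppF.mp hi)
  have hl1n : 0 < l1 n := l1_pos hn0
  set ε : ℝ := δ / (2 * l1 n) with hεdef
  have hε : 0 < ε := div_pos hδ (by linarith)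
  set Sg : ℝ := ∑ i ∈ suppF g, Real.sign (g i) * n i with hSgdef
  set D : ℝ := ∑ i ∈ (suppF g)ᶜ, |n i| with hDdef
  -- main claim
  have main : ∀ t : ℝ, t ≠ 0 → |t| ≤ ε → 0 < t * Sg + |t| * D := by
    intro t ht htε
    have hbound : ∀ i : Fin d, |t * n i| < δ := by
      intro i
      calc |t * n i| = |t| * |n i| := abs_mul _ _
        _ ≤ ε * l1 n := by
            apply mul_le_mul htε (abs_le_l1 n i) (abs_nonneg _) (le_of_lt hε)
        _ = δ / 2 := by
            rw [hεdef]; field_simp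
        _ < δ := by linarith
    set x : Fin d → ℝ := g + t • n with hxdef
    have hAx : A.mulVec x = y := by
      rw [hxdef, Matrix.mulVec_add, Matrix.mulVec_smul, hn, hgy]
      simp
    have hxg : x ≠ g := by
      rw [hxdef]
      intro h
      have : t • n = 0 := by
        have := congrArg (fun v => v - g) h
        simpa [add_sub_cancel_left] using this
      rcases smul_eq_zero.mp this with h' | h'
      · exact ht h'
      · exact hn0 h'
    -- expansion of l1 x
    have hexp : l1 x = (∑ i ∈ suppF g, |g i|) + t * Sg + |t| * D := by
      have hsplit : l1 x = (∑ i ∈ suppF g, |x i|) + ∑ i ∈ (suppF g)ᶜ, |x i| :=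
        (Finset.sum_add_sum_compl (suppF g) _).symm
      have hon : ∀ i ∈ suppF g, |x i| = |g i| + t * (Real.sign (g i) * n i) := by
        intro i hi
        have hgi : g i ≠ 0 := mem_suppF.mp hi
        have hδi : δ ≤ |g i| := Finset.inf'_le _ hi
        have hti := hbound i
        have hxi : x i = g i + t * n i := by simp [hxdef]
        rcases lt_or_gt_of_ne hgi with h | h
        · have hsign : Real.sign (g i) = -1 := Real.sign_of_neg h
          have h1 : t * n i < -g i := by
            have := (abs_lt.mp (lt_of_lt_of_le hti hδi)).2
            have hga : |g i| = -g i := abs_of_neg h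
            linarith
          have : x i < 0 := by rw [hxi]; linarith
          rw [abs_of_neg this, hxi, abs_of_neg h, hsign]; ring
        · have hsign : Real.sign (g i) = 1 := Real.sign_of_pos h
          have h1 : -g i < t * n i := by
            have := (abs_lt.mp (lt_of_lt_of_le hti hδi)).1
            have hga : |g i| = g i := abs_of_pos h
            linarith
          have : 0 < x i := by rw [hxi]; linarith
          rw [abs_of_pos this, hxi, abs_of_pos h, hsign]; ring
      have hoff : ∀ i ∈ (suppF g)ᶜ, |x i| = |t| * |n i| := by
        intro i hi
        have hgi : g i = 0 := mem_suppF_compl.mp hi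
        have hxi : x i = t * n i := by simp [hxdef, hgi]
        rw [hxi, abs_mul]
      rw [hsplit, Finset.sum_congr rfl hon, Finset.sum_congr rfl hoff,
        Finset.sum_add_distrib, ← Finset.mul_sum, ← Finset.mul_sum]
    have hl1g : l1 g = ∑ i ∈ suppF g, |g i| := by
      have : l1 g = (∑ i ∈ suppF g, |g i|) + ∑ i ∈ (suppF g)ᶜ, |g i| :=
        (Finset.sum_add_sum_compl (suppF g) _).symm
      have h0 : ∑ i ∈ (suppF g)ᶜ, |g i| = 0 :=
        Finset.sum_eq_zero (fun i hi => by rw [mem_suppF_compl.mp hi, abs_zero])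
      rw [this, h0, add_zero]
    have hlt : l1 g < l1 x := by
      rcases eq_or_lt_of_le (hgmin x hAx) with h | h
      · exact absurd (hguniq x hAx h.symm) hxg
      · exact h
    rw [hexp, hl1g] at hlt
    linarith
  have h1 := main ε (ne_of_gt hε) (by rw [abs_of_pos hε])
  have h2 := main (-ε) (by simp [ne_of_gt hε]) (by rw [abs_neg, abs_of_pos hε])
  rw [abs_of_pos hε] at h1
  rw [abs_neg, abs_of_pos hε] at h2
  rw [abs_lt]
  constructor <;> nlinarith


-- continuation: compactness lemma
lemma sup_attained {N d : ℕ} (A : Matrix (Fin N) (Fin d) ℝ) (g : Fin d → ℝ)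
    (hker : ∃ n : Fin d → ℝ, n ≠ 0 ∧ A.mulVec n = 0)
    (hD : ∀ n : Fin d → ℝ, A.mulVec n = 0 → n ≠ 0 → 0 < ∑ i ∈ (suppF g)ᶜ, |n i|)
    (num : (Fin d → ℝ) → ℝ) (hcont : Continuous num)
    (hhom : ∀ (c : ℝ), 0 < c → ∀ n, num (c • n) = c * num n) :
    IsCompact { r : ℝ | ∃ n : Fin d → ℝ, A.mulVec n = 0 ∧ n ≠ 0 ∧
        r = num n / ∑ i ∈ (suppF g)ᶜ, |n i| } ∧
    { r : ℝ | ∃ n : Fin d → ℝ, A.mulVec n = 0 ∧ n ≠ 0 ∧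
        r = num n / ∑ i ∈ (suppF g)ᶜ, |n i| }.Nonempty := by
  set den : (Fin d → ℝ) → ℝ := fun n => ∑ i ∈ (suppF g)ᶜ, |n i| with hden
  set Q : Set ℝ := { r : ℝ | ∃ n : Fin d → ℝ, A.mulVec n = 0 ∧ n ≠ 0 ∧ r = num n / den n }
    with hQ
  set K : Set (Fin d → ℝ) := {n | A.mulVec n = 0 ∧ l1 n = 1} with hK
  have hdencont : Continuous den := by
    apply continuous_finset_sum
    intro i _
    exact (continuous_apply i).abs
  have hl1cont : Continuous (l1 : (Fin d → ℝ) → ℝ) := by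
    unfold l1
    apply continuous_finset_sum
    intro i _
    exact (continuous_apply i).abs
  have hKclosed : IsClosed K := by
    have h1 : Continuous (fun n : Fin d → ℝ => A.mulVec n) := by
      continuity
    exact (isClosed_eq h1 continuous_const).inter (isClosed_eq hl1cont continuous_const)
  have hKsub : K ⊆ Metric.closedBall 0 1 := by
    intro n hn
    rw [Metric.mem_closedBall, dist_zero_right]
    rw [pi_norm_le_iff_of_nonneg zero_le_one]
    intro i
    rw [Real.norm_eq_abs]
    calc |n i| ≤ l1 n := abs_le_l1 n i
      _ = 1 := hn.2
  have hKcomp : IsCompact K :=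
    (isCompact_closedBall (0 : Fin d → ℝ) 1).of_isClosed_subset hKclosed hKsub
  have hKmem_ne : ∀ n ∈ K, n ≠ 0 := by
    intro n hn h0
    rw [h0] at hn
    have : l1 (0 : Fin d → ℝ) = 1 := hn.2
    simp [l1] at this
  have hdenpos : ∀ n ∈ K, den n ≠ 0 := fun n hn =>
    ne_of_gt (hD n hn.1 (hKmem_ne n hn))
  have hqcont : ContinuousOn (fun n => num n / den n) K :=
    ContinuousOn.div hcont.continuousOn hdencont.continuousOn hdenpos
  have himg : Q = (fun n => num n / den n) '' K := by
    ext r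
    constructor
    · rintro ⟨n, hn, hn0, rfl⟩
      have hl1n : 0 < l1 n := l1_pos hn0
      set c : ℝ := (l1 n)⁻¹ with hc
      have hcpos : 0 < c := inv_pos.mpr hl1n
      refine ⟨c • n, ⟨?_, ?_⟩, ?_⟩
      · rw [Matrix.mulVec_smul, hn, smul_zero]
      · rw [l1_smul, abs_of_pos hcpos, hc, inv_mul_cancel₀ (ne_of_gt hl1n)]
      · have hdenc : den (c • n) = c * den n := by
          simp only [hden, Pi.smul_apply, smul_eq_mul, abs_mul, abs_of_pos hcpos,
            Finset.mul_sum]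
        show num (c • n) / den (c • n) = num n / den n
        rw [hhom c hcpos n, hdenc, mul_div_mul_left _ _ (ne_of_gt hcpos)]
    · rintro ⟨n, hn, rfl⟩
      exact ⟨n, hn.1, hKmem_ne n hn, rfl⟩
  have hKne : K.Nonempty := by
    obtain ⟨n, hn0, hn⟩ := hker
    have hl1n : 0 < l1 n := l1_pos hn0
    refine ⟨(l1 n)⁻¹ • n, ?_, ?_⟩
    · rw [Matrix.mulVec_smul, hn, smul_zero]
    · rw [l1_smul, abs_of_pos (inv_pos.mpr hl1n), inv_mul_cancel₀ (ne_of_gt hl1n)]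
  constructor
  · rw [himg]
    exact hKcomp.image_of_continuousOn hqcont
  · rw [himg]
    exact hKne.image _

/-- well-posedness of the null space property constants (unique case). -/
theorem nullspace_constants_wellposed {N d : ℕ}
    (A : Matrix (Fin N) (Fin d) ℝ) (y : Fin N → ℝ) (g : Fin d → ℝ)
    (hex : ∃ x : Fin d → ℝ, A.mulVec x = y)
    (hy : y ≠ 0)
    (hker : ∃ n : Fin d → ℝ, n ≠ 0 ∧ A.mulVec n = 0)
    (hgy : A.mulVec g = y)
    (hgmin : ∀ x : Fin d → ℝ, A.mulVec x = y → l1 g ≤ l1 x)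
    (hguniq : ∀ x : Fin d → ℝ, A.mulVec x = y → l1 x = l1 g → x = g) :
    ((suppF g).Nonempty ∧ ((suppF g)ᶜ : Finset (Fin d)).Nonempty ∧
      (∀ n : Fin d → ℝ, A.mulVec n = 0 → n ≠ 0 → ∃ i ∈ (suppF g)ᶜ, n i ≠ 0)) ∧
    (0 ≤ rho A g ∧ rho A g < 1 ∧
      0 ≤ rhoMinus A g ∧ BddAbove (rhoMinusSet A g) ∧
      0 ≤ rhoTilde A g ∧ BddAbove (rhoTildeSet A g) ∧
      rho A g ∈ rhoSet A g ∧ rhoMinus A g ∈ rhoMinusSet A g ∧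
      rhoTilde A g ∈ rhoTildeSet A g) := by
  have hkey : ∀ n : Fin d → ℝ, A.mulVec n = 0 → n ≠ 0 →
      |∑ i ∈ suppF g, Real.sign (g i) * n i| < ∑ i ∈ (suppF g)ᶜ, |n i| :=
    fun n hn hn0 => key_lemma hy hgy hgmin hguniq hn hn0
  have hD : ∀ n : Fin d → ℝ, A.mulVec n = 0 → n ≠ 0 → 0 < ∑ i ∈ (suppF g)ᶜ, |n i| :=
    fun n hn hn0 => lt_of_le_of_lt (abs_nonneg _) (hkey n hn hn0)
  have hg0 : g ≠ 0 := by
    rintro rfl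
    exact hy (by simpa using hgy.symm)
  have hS : (suppF g).Nonempty := by
    obtain ⟨i, hi⟩ := Function.ne_iff.mp hg0
    exact ⟨i, mem_suppF.mpr hi⟩
  obtain ⟨n₀, hn₀0, hn₀⟩ := hker
  have hDn₀ := hD n₀ hn₀ hn₀0
  have hSc : ((suppF g)ᶜ : Finset (Fin d)).Nonempty := by
    by_contra h
    rw [Finset.not_nonempty_iff_eq_empty] at h
    rw [h, Finset.sum_empty] at hDn₀
    exact lt_irrefl 0 hDn₀
  have hexist : ∀ n : Fin d → ℝ, A.mulVec n = 0 → n ≠ 0 → ∃ i ∈ (suppF g)ᶜ, n i ≠ 0 := by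
    intro n hn hn0
    by_contra h
    push_neg at h
    have hz : ∑ i ∈ (suppF g)ᶜ, |n i| = 0 :=
      Finset.sum_eq_zero (fun i hi => by rw [h i hi, abs_zero])
    have := hD n hn hn0
    rw [hz] at this
    exact lt_irrefl 0 this
  refine ⟨⟨hS, hSc, hexist⟩, ?_⟩
  have hker' : ∃ n : Fin d → ℝ, n ≠ 0 ∧ A.mulVec n = 0 := ⟨n₀, hn₀0, hn₀⟩
  -- numerator functions
  set num₁ : (Fin d → ℝ) → ℝ := fun n => -∑ i ∈ suppF g, Real.sign (g i) * n i with hnum₁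
  set num₂ : (Fin d → ℝ) → ℝ :=
    fun n => ∑ i ∈ (suppF g).filter (fun i => Real.sign (g i) * n i < 0), |n i| with hnum₂
  set num₃ : (Fin d → ℝ) → ℝ := fun n => ∑ i ∈ suppF g, |n i| with hnum₃
  have hc1 : Continuous num₁ :=
    (continuous_finset_sum _ (fun i _ => continuous_const.mul (continuous_apply i))).neg
  have hc3 : Continuous num₃ :=
    continuous_finset_sum _ (fun i _ => (continuous_apply i).abs)
  have h2eq : num₂ = fun n => ∑ i ∈ suppF g, max (-(Real.sign (g i) * n i)) 0 := by
    funext n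
    simp only [hnum₂]
    rw [Finset.sum_filter]
    apply Finset.sum_congr rfl
    intro i hi
    have hgi : g i ≠ 0 := mem_suppF.mp hi
    have hs : |Real.sign (g i)| = 1 := by
      rcases lt_or_gt_of_ne hgi with h | h
      · simp [Real.sign_of_neg h]
      · simp [Real.sign_of_pos h]
    by_cases h : Real.sign (g i) * n i < 0
    · rw [if_pos h, max_eq_left (by linarith)]
      have habs : |Real.sign (g i) * n i| = |n i| := by rw [abs_mul, hs, one_mul]
      rw [← habs, abs_of_neg h]
    · rw [if_neg h, max_eq_right]
      push_neg at h
      linarith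
  have hc2 : Continuous num₂ := by
    rw [h2eq]
    exact continuous_finset_sum _
      (fun i _ => ((continuous_const.mul (continuous_apply i)).neg).max continuous_const)
  -- homogeneity
  have hh1 : ∀ c : ℝ, 0 < c → ∀ n, num₁ (c • n) = c * num₁ n := by
    intro c hc n
    simp only [hnum₁, Pi.smul_apply, smul_eq_mul]
    have h : ∑ x ∈ suppF g, Real.sign (g x) * (c * n x)
        = c * ∑ i ∈ suppF g, Real.sign (g i) * n i := by
      rw [Finset.mul_sum]
      exact Finset.sum_congr rfl fun i _ => by ring
    rw [h]
    ring
  have hh2 : ∀ c : ℝ, 0 < c → ∀ n, num₂ (c • n) = c * num₂ n := by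
    intro c hc n
    simp only [h2eq, Pi.smul_apply, smul_eq_mul]
    rw [Finset.mul_sum]
    apply Finset.sum_congr rfl
    intro i _
    rw [mul_max_of_nonneg _ _ (le_of_lt hc), mul_zero]
    congr 1
    ring
  have hh3 : ∀ c : ℝ, 0 < c → ∀ n, num₃ (c • n) = c * num₃ n := by
    intro c hc n
    simp only [hnum₃, Pi.smul_apply, smul_eq_mul]
    rw [Finset.mul_sum]
    apply Finset.sum_congr rfl
    intro i _
    rw [abs_mul, abs_of_pos hc]
  obtain ⟨hcomp1, hne1⟩ := sup_attained A g hker' hD num₁ hc1 hh1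
  obtain ⟨hcomp2, hne2⟩ := sup_attained A g hker' hD num₂ hc2 hh2
  obtain ⟨hcomp3, hne3⟩ := sup_attained A g hker' hD num₃ hc3 hh3
  have e1 : rhoSet A g = { r : ℝ | ∃ n : Fin d → ℝ, A.mulVec n = 0 ∧ n ≠ 0 ∧
      r = num₁ n / ∑ i ∈ (suppF g)ᶜ, |n i| } := rfl
  have e2 : rhoMinusSet A g = { r : ℝ | ∃ n : Fin d → ℝ, A.mulVec n = 0 ∧ n ≠ 0 ∧
      r = num₂ n / ∑ i ∈ (suppF g)ᶜ, |n i| } := rfl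
  have e3 : rhoTildeSet A g = { r : ℝ | ∃ n : Fin d → ℝ, A.mulVec n = 0 ∧ n ≠ 0 ∧
      r = num₃ n / ∑ i ∈ (suppF g)ᶜ, |n i| } := rfl
  have hcomp1' : IsCompact (rhoSet A g) := e1 ▸ hcomp1
  have hcomp2' : IsCompact (rhoMinusSet A g) := e2 ▸ hcomp2
  have hcomp3' : IsCompact (rhoTildeSet A g) := e3 ▸ hcomp3
  have hne1' : (rhoSet A g).Nonempty := e1 ▸ hne1
  have hne2' : (rhoMinusSet A g).Nonempty := e2 ▸ hne2
  have hne3' : (rhoTildeSet A g).Nonempty := e3 ▸ hne3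
  have hmem1 : rho A g ∈ rhoSet A g := hcomp1'.sSup_mem hne1'
  have hmem2 : rhoMinus A g ∈ rhoMinusSet A g := hcomp2'.sSup_mem hne2'
  have hmem3 : rhoTilde A g ∈ rhoTildeSet A g := hcomp3'.sSup_mem hne3'
  have hbdd1 : BddAbove (rhoSet A g) := hcomp1'.bddAbove
  have hbdd2 : BddAbove (rhoMinusSet A g) := hcomp2'.bddAbove
  have hbdd3 : BddAbove (rhoTildeSet A g) := hcomp3'.bddAbove
  -- rho < 1
  have hrho_lt : rho A g < 1 := by
    obtain ⟨n, hn, hn0, hval⟩ := hmem1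
    rw [hval]
    rw [div_lt_one (hD n hn hn0)]
    have h1 := hkey n hn hn0
    have h2 := neg_le_abs (∑ i ∈ suppF g, Real.sign (g i) * n i)
    linarith
  -- rho ≥ 0
  have hrho_nonneg : 0 ≤ rho A g := by
    set r : ℝ := (-∑ i ∈ suppF g, Real.sign (g i) * n₀ i) / ∑ i ∈ (suppF g)ᶜ, |n₀ i|
      with hr
    have hmem_r : r ∈ rhoSet A g := ⟨n₀, hn₀, hn₀0, rfl⟩
    have hmem_negr : -r ∈ rhoSet A g := by
      refine ⟨-n₀, by rw [Matrix.mulVec_neg, hn₀, neg_zero], neg_ne_zero.mpr hn₀0, ?_⟩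
      have ha : ∑ i ∈ suppF g, Real.sign (g i) * (-n₀) i
          = -∑ i ∈ suppF g, Real.sign (g i) * n₀ i := by
        rw [← Finset.sum_neg_distrib]
        apply Finset.sum_congr rfl
        intro i _
        simp [mul_neg]
      have hb : ∑ i ∈ (suppF g)ᶜ, |(-n₀) i| = ∑ i ∈ (suppF g)ᶜ, |n₀ i| := by
        apply Finset.sum_congr rfl
        intro i _
        simp
      rw [ha, hb, neg_neg, hr, neg_div, neg_neg]
    have h1 := le_csSup hbdd1 hmem_r
    have h2 := le_csSup hbdd1 hmem_negr
    have : -r ≤ rho A g := h2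
    have : r ≤ rho A g := h1
    linarith
  have hrhoMinus_nonneg : 0 ≤ rhoMinus A g := by
    obtain ⟨n, hn, hn0, hval⟩ := hmem2
    rw [hval]
    exact div_nonneg (Finset.sum_nonneg fun i _ => abs_nonneg _)
      (le_of_lt (hD n hn hn0))
  have hrhoTilde_nonneg : 0 ≤ rhoTilde A g := by
    obtain ⟨n, hn, hn0, hval⟩ := hmem3
    rw [hval]
    exact div_nonneg (Finset.sum_nonneg fun i _ => abs_nonneg _)
      (le_of_lt (hD n hn hn0))
  exact ⟨hrho_nonneg, hrho_lt, hrhoMinus_nonneg, hbdd2, hrhoTilde_nonneg, hbdd3,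
    hmem1, hmem2, hmem3⟩
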